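/- arXiv:1910.06549 — 3 statements merged into one kernel-verified Lean document; each statement's English description precedes it below -/
import Mathlib

section
/- Let M be a von Neumann algebra, I an index set, and (x_i)_{i∈I}, (y_i)_{i∈I} families in M such that the finite partial sums Σ_{i∈J} x_i* x_i (for finite J ⊆ I) are uniformly bounded in norm, and likewise the partial sums Σ_{i∈J} y_i y_i* are uniformly bounded. Then the family (y_i x_i)_{i∈I} is summable in the weak* (ultraweak) topology of M, and the norm of the sum satisfies ‖Σ_i y_i x_i‖ ≤ sup_J ‖Σ_{i∈J} y_i y_i*‖^{1/2} · sup_J ‖Σ_{i∈J} x_i* x_i‖^{1/2}. -/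
open scoped InnerProductSpace

section Aux

variable {H : Type*} [NormedAddCommGroup H] [InnerProductSpace ℂ H] [CompleteSpace H]
variable {I : Type*}

/-- Column boundedness gives a quadratic bound on `∑ ‖xᵢ η‖²`. -/
private lemma col_bound (x : I → H →L[ℂ] H) (c : ℝ)
    (hx : ∀ J : Finset I, ‖∑ i ∈ J, star (x i) * x i‖ ≤ c) (η : H) (J : Finset I) :
    ∑ i ∈ J, ‖x i η‖ ^ 2 ≤ c * ‖η‖ ^ 2 := by
  have h1 : ((∑ i ∈ J, ‖x i η‖ ^ 2 : ℝ) : ℂ) = ⟪η, (∑ i ∈ J, star (x i) * x i) η⟫_ℂ := by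
    rw [ContinuousLinearMap.sum_apply, inner_sum]
    push_cast
    refine Finset.sum_congr rfl fun i _ => ?_
    rw [Function.comp_apply, ContinuousLinearMap.star_eq_adjoint,
      ContinuousLinearMap.adjoint_inner_right, inner_self_eq_norm_sq_to_K]
    norm_cast
  have h2 : ∑ i ∈ J, ‖x i η‖ ^ 2 = ‖((∑ i ∈ J, ‖x i η‖ ^ 2 : ℝ) : ℂ)‖ := by
    rw [Complex.norm_real, Real.norm_of_nonneg (Finset.sum_nonneg fun i _ => sq_nonneg _)]
  rw [h2, h1]
  calc ‖⟪η, (∑ i ∈ J, star (x i) * x i) η⟫_ℂ‖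
      ≤ ‖η‖ * ‖(∑ i ∈ J, star (x i) * x i) η‖ := norm_inner_le_norm _ _
    _ ≤ c * ‖η‖ ^ 2 := by
        have h3 := ContinuousLinearMap.le_opNorm (∑ i ∈ J, star (x i) * x i) η
        have h4 := hx J
        nlinarith [norm_nonneg η, norm_nonneg ((∑ i ∈ J, star (x i) * x i) η),
          ContinuousLinearMap.opNorm_nonneg (∑ i ∈ J, star (x i) * x i)]

/-- Riesz representation of the weakly-summed matrix coefficients. -/
private lemma exists_vec (w : I → H →L[ℂ] H) (C : ℝ)
    (hsum : ∀ ξ η : H, Summable fun i => ⟪ξ, w i η⟫_ℂ)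
    (hbound : ∀ ξ η : H, ‖∑' i, ⟪ξ, w i η⟫_ℂ‖ ≤ C * (‖ξ‖ * ‖η‖)) (η : H) :
    ∃ v : H, ∀ ξ, ⟪ξ, v⟫_ℂ = ∑' i, ⟪ξ, w i η⟫_ℂ := by
  have hsum' : ∀ ξ : H, Summable fun i => ⟪w i η, ξ⟫_ℂ := by
    intro ξ
    have h := (hsum ξ η).star
    refine h.congr fun i => ?_
    exact inner_conj_symm (𝕜 := ℂ) (w i η) ξ
  have hstar : ∀ ξ : H, (∑' i, ⟪w i η, ξ⟫_ℂ) = star (∑' i, ⟪ξ, w i η⟫_ℂ) := by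
    intro ξ
    rw [tsum_star]
    exact tsum_congr fun i => (inner_conj_symm (𝕜 := ℂ) (w i η) ξ).symm
  let Fl : H →ₗ[ℂ] ℂ :=
    { toFun := fun ξ => ∑' i, ⟪w i η, ξ⟫_ℂ
      map_add' := by
        intro ξ₁ ξ₂
        simp only [inner_add_right]
        exact Summable.tsum_add (hsum' ξ₁) (hsum' ξ₂)
      map_smul' := by
        intro c ξ
        simp only [inner_smul_right, RingHom.id_apply]
        exact tsum_mul_left }
  have hb : ∀ ξ, ‖Fl ξ‖ ≤ (C * ‖η‖) * ‖ξ‖ := by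
    intro ξ
    have : ‖Fl ξ‖ = ‖∑' i, ⟪ξ, w i η⟫_ℂ‖ := by
      show ‖∑' i, ⟪w i η, ξ⟫_ℂ‖ = _
      rw [hstar ξ, norm_star]
    rw [this]
    calc ‖∑' i, ⟪ξ, w i η⟫_ℂ‖ ≤ C * (‖ξ‖ * ‖η‖) := hbound ξ η
      _ = (C * ‖η‖) * ‖ξ‖ := by ring
  let F := Fl.mkContinuous (C * ‖η‖) hb
  refine ⟨(InnerProductSpace.toDual ℂ H).symm F, fun ξ => ?_⟩
  have h1 : ⟪(InnerProductSpace.toDual ℂ H).symm F, ξ⟫_ℂ = F ξ :=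
    InnerProductSpace.toDual_symm_apply
  have h2 : (F ξ : ℂ) = ∑' i, ⟪w i η, ξ⟫_ℂ := rfl
  rw [← inner_conj_symm, h1, h2, hstar ξ]
  simp

end Aux

/-- If `(xᵢ)` is a column-bounded family and `(yᵢ)` a row-bounded family in a von
Neumann algebra `M` (i.e. the finite partial sums `Σ xᵢ*xᵢ` resp. `Σ yᵢyᵢ*` are
uniformly bounded by `cx` resp. `cy`), then the family `(yᵢxᵢ)` is summable in the
weak* topology of `M` (encoded by convergence of all matrix coefficients of the net
of finite partial sums), with sum `z ∈ M` satisfying `‖z‖ ≤ cy^{1/2} · cx^{1/2}`. -/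
theorem stmt_7 {H : Type*} [NormedAddCommGroup H] [InnerProductSpace ℂ H]
    [CompleteSpace H] (M : VonNeumannAlgebra H) {I : Type*}
    (x y : I → H →L[ℂ] H) (hxM : ∀ i, x i ∈ M) (hyM : ∀ i, y i ∈ M)
    (cx cy : ℝ)
    (hx : ∀ J : Finset I, ‖∑ i ∈ J, star (x i) * x i‖ ≤ cx)
    (hy : ∀ J : Finset I, ‖∑ i ∈ J, y i * star (y i)‖ ≤ cy) :
    ∃ z : H →L[ℂ] H, z ∈ M ∧
      (∀ ξ η : H, HasSum (fun i => ⟪ξ, (y i * x i) η⟫_ℂ) ⟪ξ, z η⟫_ℂ) ∧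
      ‖z‖ ≤ Real.sqrt cy * Real.sqrt cx := by
  have hcx : 0 ≤ cx := le_trans (by simp) (hx ∅)
  have hcy : 0 ≤ cy := le_trans (by simp) (hy ∅)
  set C : ℝ := Real.sqrt cy * Real.sqrt cx with hCdef
  have hC0 : 0 ≤ C := mul_nonneg (Real.sqrt_nonneg _) (Real.sqrt_nonneg _)
  set w : I → H →L[ℂ] H := fun i => y i * x i with hw
  -- row bound on star y
  have hy' : ∀ J : Finset I, ‖∑ i ∈ J, star (star (y i)) * star (y i)‖ ≤ cy := by
    simpa using hy
  have hrow : ∀ (ξ : H) (J : Finset I), ∑ i ∈ J, ‖(star (y i)) ξ‖ ^ 2 ≤ cy * ‖ξ‖ ^ 2 :=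
    fun ξ J => col_bound (fun i => star (y i)) cy hy' ξ J
  have hcol : ∀ (η : H) (J : Finset I), ∑ i ∈ J, ‖x i η‖ ^ 2 ≤ cx * ‖η‖ ^ 2 :=
    fun η J => col_bound x cx hx η J
  have hterm : ∀ (ξ η : H) (i : I), ⟪ξ, w i η⟫_ℂ = ⟪(star (y i)) ξ, x i η⟫_ℂ := by
    intro ξ η i
    rw [hw]
    rw [ContinuousLinearMap.mul_apply, ContinuousLinearMap.star_eq_adjoint,
      ContinuousLinearMap.adjoint_inner_left]
  have habs : ∀ (ξ η : H) (J : Finset I),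
      ∑ i ∈ J, ‖⟪ξ, w i η⟫_ℂ‖ ≤ C * (‖ξ‖ * ‖η‖) := by
    intro ξ η J
    calc ∑ i ∈ J, ‖⟪ξ, w i η⟫_ℂ‖
        ≤ ∑ i ∈ J, ‖(star (y i)) ξ‖ * ‖x i η‖ := by
          refine Finset.sum_le_sum fun i _ => ?_
          rw [hterm]; exact norm_inner_le_norm _ _
      _ ≤ Real.sqrt (∑ i ∈ J, ‖(star (y i)) ξ‖ ^ 2) * Real.sqrt (∑ i ∈ J, ‖x i η‖ ^ 2) :=
          Real.sum_mul_le_sqrt_mul_sqrt _ _ _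
      _ ≤ Real.sqrt (cy * ‖ξ‖ ^ 2) * Real.sqrt (cx * ‖η‖ ^ 2) := by
          gcongr
          exacts [hrow ξ J, hcol η J]
      _ = C * (‖ξ‖ * ‖η‖) := by
          rw [Real.sqrt_mul hcy, Real.sqrt_mul hcx, Real.sqrt_sq (norm_nonneg _),
            Real.sqrt_sq (norm_nonneg _)]
          ring
  have hsumnorm : ∀ ξ η : H, Summable fun i => ‖⟪ξ, w i η⟫_ℂ‖ := fun ξ η =>
    summable_of_sum_le (fun i => norm_nonneg _) (habs ξ η)
  have hsum : ∀ ξ η : H, Summable fun i => ⟪ξ, w i η⟫_ℂ := fun ξ η =>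
    (hsumnorm ξ η).of_norm
  have htsum_bound : ∀ ξ η : H, ‖∑' i, ⟪ξ, w i η⟫_ℂ‖ ≤ C * (‖ξ‖ * ‖η‖) := by
    intro ξ η
    refine le_trans (norm_tsum_le_tsum_norm (hsumnorm ξ η)) ?_
    exact Summable.tsum_le_of_sum_le (hsumnorm ξ η) (habs ξ η)
  obtain ⟨zfun, hzfun⟩ := Classical.axiomOfChoice (exists_vec w C hsum htsum_bound)
  -- basic reformulation
  have key : ∀ ξ η : H, ⟪ξ, zfun η⟫_ℂ = ∑' i, ⟪ξ, w i η⟫_ℂ := fun ξ η => hzfun η ξ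
  -- linearity of zfun
  have hadd : ∀ η₁ η₂ : H, zfun (η₁ + η₂) = zfun η₁ + zfun η₂ := by
    intro η₁ η₂
    refine ext_inner_left ℂ fun ξ => ?_
    rw [inner_add_right, key, key, key]
    rw [show (fun i => ⟪ξ, w i (η₁ + η₂)⟫_ℂ) = fun i => ⟪ξ, w i η₁⟫_ℂ + ⟪ξ, w i η₂⟫_ℂ from
      funext fun i => by rw [map_add, inner_add_right]]
    exact Summable.tsum_add (hsum ξ η₁) (hsum ξ η₂)
  have hsmul : ∀ (c : ℂ) (η : H), zfun (c • η) = c • zfun η := by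
    intro c η
    refine ext_inner_left ℂ fun ξ => ?_
    rw [inner_smul_right, key, key]
    rw [show (fun i => ⟪ξ, w i (c • η)⟫_ℂ) = fun i => c * ⟪ξ, w i η⟫_ℂ from
      funext fun i => by rw [map_smul, inner_smul_right]]
    exact tsum_mul_left
  -- norm bound
  have hnb : ∀ η : H, ‖zfun η‖ ≤ C * ‖η‖ := by
    intro η
    have hsq : ‖zfun η‖ ^ 2 ≤ C * (‖zfun η‖ * ‖η‖) := by
      have h1 : (⟪zfun η, zfun η⟫_ℂ) = ∑' i, ⟪zfun η, w i η⟫_ℂ := key (zfun η) η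
      have h2 : ‖(⟪zfun η, zfun η⟫_ℂ)‖ = ‖zfun η‖ ^ 2 := by
        rw [inner_self_eq_norm_sq_to_K, norm_pow, RCLike.norm_ofReal, abs_norm]
      rw [← h2, h1]
      exact htsum_bound (zfun η) η
    rcases eq_or_lt_of_le (norm_nonneg (zfun η)) with h0 | h0
    · rw [← h0]
      positivity
    · have := le_of_mul_le_mul_right (by nlinarith : ‖zfun η‖ * ‖zfun η‖ ≤ (C * ‖η‖) * ‖zfun η‖) h0
      exact this
  let zl : H →ₗ[ℂ] H := { toFun := zfun, map_add' := hadd, map_smul' := hsmul }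
  let z : H →L[ℂ] H := zl.mkContinuous C hnb
  have hzapp : ∀ η, z η = zfun η := fun η => rfl
  refine ⟨z, ?_, ?_, ?_⟩
  · -- membership in M via double centralizer
    rw [← SetLike.mem_coe, ← M.centralizer_centralizer]
    rw [Set.mem_centralizer_iff]
    intro T hT
    ext η
    refine ext_inner_left ℂ fun ξ => ?_
    have hTw : ∀ i, T * w i = w i * T := fun i =>
      (Set.mem_centralizer_iff.mp hT (w i) (mul_mem (hyM i) (hxM i))).symm
    calc ⟪ξ, (T * z) η⟫_ℂ = ⟪(ContinuousLinearMap.adjoint T) ξ, z η⟫_ℂ := by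
          rw [ContinuousLinearMap.mul_apply, ContinuousLinearMap.adjoint_inner_left]
      _ = ∑' i, ⟪(ContinuousLinearMap.adjoint T) ξ, w i η⟫_ℂ := by rw [hzapp, key]
      _ = ∑' i, ⟪ξ, w i (T η)⟫_ℂ := by
          refine tsum_congr fun i => ?_
          rw [ContinuousLinearMap.adjoint_inner_left]
          have : T (w i η) = w i (T η) := by
            have := congrArg (fun A => A η) (hTw i)
            simpa [ContinuousLinearMap.mul_apply] using this
          rw [this]
      _ = ⟪ξ, (z * T) η⟫_ℂ := by
          rw [ContinuousLinearMap.mul_apply, hzapp, key]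
  · intro ξ η
    rw [hzapp, key]
    exact (hsum ξ η).hasSum
  · exact zl.mkContinuous_norm_le hC0 hnb
end

section
/- Let H₁, H₂, H₃ be Hilbert spaces and let u : S²(H₂,H₃) × S²(H₁,H₂) → B(H₁,H₃) be a bounded bilinear map satisfying u(y, xR) = u(y,x)R for all x ∈ S²(H₁,H₂), y ∈ S²(H₂,H₃) and all R in the commutant M₁' of a von Neumann algebra M₁ ⊆ B(H₁). For ξ₂, η₂ ∈ H₂ and ξ₃, η₃ ∈ H₃, define U₁(ξ̄₂,η₂,ξ̄₃,η₃) ∈ B(H₁) by ⟨U₁(ξ̄₂,η₂,ξ̄₃,η₃)(η₁), ξ₁⟩ = ⟨u(ξ̄₂⊗η₃, ξ̄₁⊗η₂)(η₁), ξ₃⟩ for all ξ₁, η₁ ∈ H₁. Then every operator U₁(ξ̄₂,η₂,ξ̄₃,η₃) belongs to M₁. Conversely, if all such operators belong to M₁, then u(y, xR) = u(y,x)R for all x, y and R ∈ M₁'. -/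
open scoped InnerProductSpace ComplexConjugate
open ContinuousLinearMap MeasureTheory

noncomputable section

section HSdefs

variable {ι H K : Type*} [NormedAddCommGroup H] [InnerProductSpace ℂ H]
  [NormedAddCommGroup K] [InnerProductSpace ℂ K]

/-- Hilbert–Schmidt predicate w.r.t. a Hilbert basis. -/
def IsHS (b : HilbertBasis ι ℂ H) (T : H →L[ℂ] K) : Prop :=
  Summable fun i => ‖T (b i)‖ ^ 2

/-- Hilbert–Schmidt norm w.r.t. a Hilbert basis. -/
def hsNorm (b : HilbertBasis ι ℂ H) (T : H →L[ℂ] K) : ℝ :=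
  Real.sqrt (∑' i, ‖T (b i)‖ ^ 2)

/-- The absolute value `|T| = sqrt (T* T)`. -/
def absCLM [CompleteSpace H] [CompleteSpace K] (T : H →L[ℂ] K) : H →L[ℂ] H :=
  CFC.sqrt ((ContinuousLinearMap.adjoint T) ∘L T)

/-- Trace class predicate w.r.t. a Hilbert basis: `tr |T| < ∞`. -/
def IsTraceClass [CompleteSpace H] [CompleteSpace K]
    (b : HilbertBasis ι ℂ H) (T : H →L[ℂ] K) : Prop :=
  Summable fun i => (⟪b i, absCLM T (b i)⟫_ℂ).re

/-- Trace norm `tr |T|` w.r.t. a Hilbert basis. -/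
def traceNorm [CompleteSpace H] [CompleteSpace K]
    (b : HilbertBasis ι ℂ H) (T : H →L[ℂ] K) : ℝ :=
  ∑' i, (⟪b i, absCLM T (b i)⟫_ℂ).re

/-- Rank-one operator `ζ ↦ ⟪k, ζ⟫ • h` (i.e. `h ⊗ k̄` with inner products
linear in the first variable). -/
def rankOne (h : K) (k : H) : H →L[ℂ] K :=
  (innerSL ℂ k).smulRight h

end HSdefs

open scoped ENNReal NNReal

section Helpers

variable {ι κ H K : Type*} [NormedAddCommGroup H] [InnerProductSpace ℂ H]
  [NormedAddCommGroup K] [InnerProductSpace ℂ K]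

lemma rankOne_apply' (h : K) (k : H) (x : H) : rankOne h k x = ⟪k, x⟫_ℂ • h := rfl

lemma rankOne_add_right (h : K) (k k' : H) :
    rankOne h (k + k') = rankOne h k + rankOne h k' := by
  ext x; simp [rankOne_apply', inner_add_left, add_smul]

lemma rankOne_smul_right (h : K) (z : ℂ) (k : H) :
    rankOne h (z • k) = (starRingEnd ℂ) z • rankOne h k := by
  ext x; simp [rankOne_apply', inner_smul_left, smul_smul]; rw [mul_comm]

lemma rankOne_comp [CompleteSpace H] (h : K) (k : H) (R : H →L[ℂ] H) :
    rankOne h k ∘L R = rankOne h (ContinuousLinearMap.adjoint R k) := by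
  ext x; simp [rankOne_apply', ContinuousLinearMap.adjoint_inner_left]

lemma parseval_hasSum (b : HilbertBasis ι ℂ H) (v : H) :
    HasSum (fun i => ‖⟪b i, v⟫_ℂ‖ ^ 2) (‖v‖ ^ 2) := by
  have h := (b.hasSum_inner_mul_inner v v).mapL Complex.reCLM
  have e1 : (fun i => Complex.reCLM (⟪v, b i⟫_ℂ * ⟪b i, v⟫_ℂ))
      = fun i => ‖⟪b i, v⟫_ℂ‖ ^ 2 := by
    funext i
    rw [← inner_conj_symm v (b i), RCLike.conj_mul]
    simp [← Complex.ofReal_pow]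
  have e2 : Complex.reCLM ⟪v, v⟫_ℂ = ‖v‖ ^ 2 := by
    simpa using inner_self_eq_norm_sq (𝕜 := ℂ) v
  rw [e1, e2] at h
  exact h

lemma parseval_tsum_enn (b : HilbertBasis ι ℂ H) (v : H) :
    ∑' i, (‖⟪b i, v⟫_ℂ‖₊ : ℝ≥0∞) ^ 2 = (‖v‖₊ : ℝ≥0∞) ^ 2 := by
  have h := parseval_hasSum b v
  have h2 : HasSum (fun i => (‖⟪b i, v⟫_ℂ‖₊ ^ 2 : ℝ≥0)) (‖v‖₊ ^ 2) := by
    rw [← NNReal.hasSum_coe]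
    push_cast
    exact h
  calc ∑' i, (‖⟪b i, v⟫_ℂ‖₊ : ℝ≥0∞) ^ 2
      = ∑' i, ((‖⟪b i, v⟫_ℂ‖₊ ^ 2 : ℝ≥0) : ℝ≥0∞) := by
        refine tsum_congr fun i => ?_; push_cast; try ring
    _ = (((‖v‖₊ ^ 2 : ℝ≥0)) : ℝ≥0∞) := by rw [← ENNReal.coe_tsum h2.summable, h2.tsum_eq]
    _ = (‖v‖₊ : ℝ≥0∞) ^ 2 := by push_cast; try ring

/-- extended-real Hilbert–Schmidt norm squared -/
def hsE (b : HilbertBasis ι ℂ H) (T : H →L[ℂ] K) : ℝ≥0∞ :=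
  ∑' i, (‖T (b i)‖₊ : ℝ≥0∞) ^ 2

lemma isHS_iff_hsE (b : HilbertBasis ι ℂ H) (T : H →L[ℂ] K) :
    IsHS b T ↔ hsE b T ≠ ⊤ := by
  rw [IsHS, hsE]
  have e : ∀ i, (‖T (b i)‖₊ : ℝ≥0∞) ^ 2 = ((‖T (b i)‖₊ ^ 2 : ℝ≥0) : ℝ≥0∞) := by
    intro i; push_cast; try ring
  rw [tsum_congr e, ENNReal.tsum_coe_ne_top_iff_summable, ← NNReal.summable_coe]
  apply summable_congr
  intro i; push_cast; try ring

lemma tsum_sq_eq_toReal (b : HilbertBasis ι ℂ H) (T : H →L[ℂ] K) (h : IsHS b T) :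
    ∑' i, ‖T (b i)‖ ^ 2 = (hsE b T).toReal := by
  have hnn : Summable (fun i => (‖T (b i)‖₊ ^ 2 : ℝ≥0)) := by
    rw [← NNReal.summable_coe]
    refine (summable_congr ?_).mpr h
    intro i; push_cast; try ring
  have e : hsE b T = ((∑' i, (‖T (b i)‖₊ ^ 2 : ℝ≥0) : ℝ≥0) : ℝ≥0∞) := by
    rw [hsE, ENNReal.coe_tsum hnn]
    refine tsum_congr fun i => ?_; push_cast; try ring
  rw [e, ENNReal.coe_toReal, NNReal.coe_tsum]
  refine tsum_congr fun i => ?_; push_cast; try ring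

lemma hsNorm_eq_sqrt_toReal (b : HilbertBasis ι ℂ H) (T : H →L[ℂ] K) (h : IsHS b T) :
    hsNorm b T = Real.sqrt (hsE b T).toReal := by
  rw [hsNorm, tsum_sq_eq_toReal b T h]

lemma hsNorm_nonneg (b : HilbertBasis ι ℂ H) (T : H →L[ℂ] K) : 0 ≤ hsNorm b T :=
  Real.sqrt_nonneg _

lemma isHS_rankOne (b : HilbertBasis ι ℂ H) (h : K) (k : H) : IsHS b (rankOne h k) := by
  have e : (fun i => ‖rankOne h k (b i)‖ ^ 2) = fun i => ‖⟪b i, k⟫_ℂ‖ ^ 2 * ‖h‖ ^ 2 := by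
    funext i; rw [rankOne_apply', norm_smul, mul_pow, norm_inner_symm]
  rw [IsHS, e]
  exact (parseval_hasSum b k).summable.mul_right _

lemma hsNorm_rankOne (b : HilbertBasis ι ℂ H) (h : K) (k : H) :
    hsNorm b (rankOne h k) = ‖k‖ * ‖h‖ := by
  have e : (fun i => ‖rankOne h k (b i)‖ ^ 2) = fun i => ‖⟪b i, k⟫_ℂ‖ ^ 2 * ‖h‖ ^ 2 := by
    funext i; rw [rankOne_apply', norm_smul, mul_pow, norm_inner_symm]
  rw [hsNorm, e, tsum_mul_right, (parseval_hasSum b k).tsum_eq]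
  rw [show ‖k‖ ^ 2 * ‖h‖ ^ 2 = (‖k‖ * ‖h‖) ^ 2 by ring]
  exact Real.sqrt_sq (by positivity)

lemma isHS_of_le {b : HilbertBasis ι ℂ H} {S T : H →L[ℂ] K} (hT : IsHS b T)
    (hle : ∀ i, ‖S (b i)‖ ≤ ‖T (b i)‖) : IsHS b S :=
  Summable.of_nonneg_of_le (fun i => sq_nonneg _)
    (fun i => pow_le_pow_left₀ (norm_nonneg _) (hle i) 2) hT

lemma hsNorm_le_of_le {b : HilbertBasis ι ℂ H} {S T : H →L[ℂ] K} (hT : IsHS b T)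
    (hle : ∀ i, ‖S (b i)‖ ≤ ‖T (b i)‖) : hsNorm b S ≤ hsNorm b T :=
  Real.sqrt_le_sqrt (Summable.tsum_le_tsum
    (fun i => pow_le_pow_left₀ (norm_nonneg _) (hle i) 2) (isHS_of_le hT hle) hT)

lemma hsE_eq_adjoint [CompleteSpace H] [CompleteSpace K] (b : HilbertBasis ι ℂ H)
    (c : HilbertBasis κ ℂ K) (T : H →L[ℂ] K) :
    hsE b T = ∑' j, (‖ContinuousLinearMap.adjoint T (c j)‖₊ : ℝ≥0∞) ^ 2 := by
  calc hsE b T = ∑' i, ∑' j, (‖⟪c j, T (b i)⟫_ℂ‖₊ : ℝ≥0∞) ^ 2 :=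
        tsum_congr fun i => (parseval_tsum_enn c (T (b i))).symm
    _ = ∑' j, ∑' i, (‖⟪c j, T (b i)⟫_ℂ‖₊ : ℝ≥0∞) ^ 2 := ENNReal.tsum_comm
    _ = ∑' j, ∑' i, (‖⟪b i, ContinuousLinearMap.adjoint T (c j)⟫_ℂ‖₊ : ℝ≥0∞) ^ 2 := by
        refine tsum_congr fun j => tsum_congr fun i => ?_
        congr 2
        apply NNReal.coe_injective
        rw [coe_nnnorm, coe_nnnorm, ← ContinuousLinearMap.adjoint_inner_left T (b i) (c j),
          norm_inner_symm]
    _ = ∑' j, (‖ContinuousLinearMap.adjoint T (c j)‖₊ : ℝ≥0∞) ^ 2 :=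
        tsum_congr fun j => parseval_tsum_enn b _

lemma hsE_comp_le [CompleteSpace H] [CompleteSpace K] (b : HilbertBasis ι ℂ H)
    (c : HilbertBasis κ ℂ K) (T : H →L[ℂ] K) (R : H →L[ℂ] H) :
    hsE b (T ∘L R) ≤ (‖R‖₊ : ℝ≥0∞) ^ 2 * hsE b T := by
  rw [hsE_eq_adjoint b c, hsE_eq_adjoint b c T, ContinuousLinearMap.adjoint_comp]
  have key : ∀ j, (‖(ContinuousLinearMap.adjoint R ∘L ContinuousLinearMap.adjoint T) (c j)‖₊ : ℝ≥0∞) ^ 2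
      ≤ (‖R‖₊ : ℝ≥0∞) ^ 2 * (‖ContinuousLinearMap.adjoint T (c j)‖₊ : ℝ≥0∞) ^ 2 := by
    intro j
    have h1 : ‖(ContinuousLinearMap.adjoint R ∘L ContinuousLinearMap.adjoint T) (c j)‖₊
        ≤ ‖R‖₊ * ‖ContinuousLinearMap.adjoint T (c j)‖₊ := by
      have h2 := (ContinuousLinearMap.adjoint R).le_opNNNorm
        (ContinuousLinearMap.adjoint T (c j))
      have h3 : ‖ContinuousLinearMap.adjoint R‖₊ = ‖R‖₊ := by
        apply NNReal.coe_injective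
        simpa using LinearIsometryEquiv.norm_map ContinuousLinearMap.adjoint R
      rw [h3] at h2
      simpa using h2
    calc (‖(ContinuousLinearMap.adjoint R ∘L ContinuousLinearMap.adjoint T) (c j)‖₊ : ℝ≥0∞) ^ 2
        ≤ ((‖R‖₊ * ‖ContinuousLinearMap.adjoint T (c j)‖₊ : ℝ≥0) : ℝ≥0∞) ^ 2 := by
          have h4 : (‖(ContinuousLinearMap.adjoint R ∘L ContinuousLinearMap.adjoint T) (c j)‖₊ : ℝ≥0∞)
              ≤ ((‖R‖₊ * ‖ContinuousLinearMap.adjoint T (c j)‖₊ : ℝ≥0) : ℝ≥0∞) := by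
            exact_mod_cast h1
          exact pow_le_pow_left' h4 2
      _ = (‖R‖₊ : ℝ≥0∞) ^ 2 * (‖ContinuousLinearMap.adjoint T (c j)‖₊ : ℝ≥0∞) ^ 2 := by
          push_cast; try ring
  calc ∑' j, (‖(ContinuousLinearMap.adjoint R ∘L ContinuousLinearMap.adjoint T) (c j)‖₊ : ℝ≥0∞) ^ 2
      ≤ ∑' j, (‖R‖₊ : ℝ≥0∞) ^ 2 * (‖ContinuousLinearMap.adjoint T (c j)‖₊ : ℝ≥0∞) ^ 2 :=
        ENNReal.tsum_le_tsum key
    _ = (‖R‖₊ : ℝ≥0∞) ^ 2 * ∑' j, (‖ContinuousLinearMap.adjoint T (c j)‖₊ : ℝ≥0∞) ^ 2 :=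
        ENNReal.tsum_mul_left

lemma isHS_comp [CompleteSpace H] [CompleteSpace K] {b : HilbertBasis ι ℂ H}
    (c : HilbertBasis κ ℂ K) {T : H →L[ℂ] K} (h : IsHS b T) (R : H →L[ℂ] H) :
    IsHS b (T ∘L R) := by
  rw [isHS_iff_hsE] at h ⊢
  exact ne_top_of_le_ne_top (ENNReal.mul_ne_top (ENNReal.pow_ne_top ENNReal.coe_ne_top) h)
    (hsE_comp_le b c T R)

lemma hsNorm_comp_le [CompleteSpace H] [CompleteSpace K] {b : HilbertBasis ι ℂ H}
    (c : HilbertBasis κ ℂ K) {T : H →L[ℂ] K} (h : IsHS b T) (R : H →L[ℂ] H) :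
    hsNorm b (T ∘L R) ≤ hsNorm b T * ‖R‖ := by
  have h2 : IsHS b (T ∘L R) := isHS_comp c h R
  have hfin : hsE b T ≠ ⊤ := (isHS_iff_hsE b T).mp h
  have hmul : ((‖R‖₊ : ℝ≥0∞) ^ 2 * hsE b T) ≠ ⊤ :=
    ENNReal.mul_ne_top (ENNReal.pow_ne_top ENNReal.coe_ne_top) hfin
  calc hsNorm b (T ∘L R) = Real.sqrt (hsE b (T ∘L R)).toReal := hsNorm_eq_sqrt_toReal b _ h2
    _ ≤ Real.sqrt (‖R‖ ^ 2 * (hsE b T).toReal) := by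
        apply Real.sqrt_le_sqrt
        calc (hsE b (T ∘L R)).toReal ≤ ((‖R‖₊ : ℝ≥0∞) ^ 2 * hsE b T).toReal :=
              ENNReal.toReal_mono hmul (hsE_comp_le b c T R)
          _ = ‖R‖ ^ 2 * (hsE b T).toReal := by
              rw [ENNReal.toReal_mul]
              congr 1
              try simp
    _ = ‖R‖ * Real.sqrt (hsE b T).toReal := by
        rw [Real.sqrt_mul (sq_nonneg _), Real.sqrt_sq (norm_nonneg _)]
    _ = hsNorm b T * ‖R‖ := by rw [mul_comm, hsNorm_eq_sqrt_toReal b T h]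

/-- finite-rank partial sum of `x` along the basis `b`. -/
def psum (b : HilbertBasis ι ℂ H) (x : H →L[ℂ] K) (F : Finset ι) : H →L[ℂ] K :=
  ∑ i ∈ F, rankOne (x (b i)) (b i)

lemma psum_apply [DecidableEq ι] (b : HilbertBasis ι ℂ H) (x : H →L[ℂ] K) (F : Finset ι) (k : ι) :
    psum b x F (b k) = if k ∈ F then x (b k) else 0 := by
  classical
  rw [psum, ContinuousLinearMap.sum_apply]
  have e : ∀ i ∈ F, rankOne (x (b i)) (b i) (b k) = if i = k then x (b k) else 0 := by
    intro i _
    rw [rankOne_apply']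
    have : ⟪b i, b k⟫_ℂ = if i = k then 1 else 0 := by
      rw [← HilbertBasis.repr_apply_apply, HilbertBasis.repr_self]
      rw [lp.single_apply]
      simp [eq_comm]
      by_cases hik : i = k
      · simp [hik]
      · simp [hik, Ne.symm hik, Pi.single_apply]
    rw [this]
    by_cases hik : i = k <;> simp [hik]
  rw [Finset.sum_congr rfl e, Finset.sum_ite_eq' F k fun _ => x (b k)]

lemma sub_psum_apply [DecidableEq ι] (b : HilbertBasis ι ℂ H) (x : H →L[ℂ] K) (F : Finset ι) (k : ι) :
    (x - psum b x F) (b k) = if k ∈ F then 0 else x (b k) := by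
  rw [ContinuousLinearMap.sub_apply, psum_apply]
  by_cases hk : k ∈ F <;> simp [hk]

lemma psum_dom (b : HilbertBasis ι ℂ H) (x : H →L[ℂ] K) (F : Finset ι) (k : ι) :
    ‖psum b x F (b k)‖ ≤ ‖x (b k)‖ := by
  classical
  rw [psum_apply]; by_cases hk : k ∈ F <;> simp [hk]

lemma sub_psum_dom (b : HilbertBasis ι ℂ H) (x : H →L[ℂ] K) (F : Finset ι) (k : ι) :
    ‖(x - psum b x F) (b k)‖ ≤ ‖x (b k)‖ := by
  classical
  rw [sub_psum_apply]; by_cases hk : k ∈ F <;> simp [hk]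

lemma exists_psum_close {b : HilbertBasis ι ℂ H} {x : H →L[ℂ] K} (hx : IsHS b x)
    {ε : ℝ} (hε : 0 < ε) : ∃ F : Finset ι, hsNorm b (x - psum b x F) < ε := by
  classical
  set f : ι → ℝ := fun i => ‖x (b i)‖ ^ 2 with hf
  have hfs : Summable f := hx
  have hlt : (∑' i, f i) - ε ^ 2 < ∑' i, f i := by nlinarith
  obtain ⟨F, hF⟩ := (hfs.hasSum.eventually (eventually_gt_nhds hlt)).exists
  refine ⟨F, ?_⟩
  have happ : ∀ k, ‖(x - psum b x F) (b k)‖ ^ 2 = if k ∈ F then 0 else f k := by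
    intro k
    rw [sub_psum_apply]
    by_cases hk : k ∈ F <;> simp [hk, hf]
  have hg : Summable fun k => ‖(x - psum b x F) (b k)‖ ^ 2 :=
    isHS_of_le hx (sub_psum_dom b x F)
  have h1 : Summable fun k => if k ∈ F then f k else 0 :=
    summable_of_ne_finset_zero (s := F) (by intro k hk; simp [hk])
  have hsplit : f = fun k => (if k ∈ F then f k else 0) + ‖(x - psum b x F) (b k)‖ ^ 2 := by
    funext k
    rw [happ]
    by_cases hk : k ∈ F <;> simp [hk]
  have htsum : ∑' k, f k = (∑ k ∈ F, f k) + ∑' k, ‖(x - psum b x F) (b k)‖ ^ 2 := by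
    nth_rewrite 1 [hsplit]
    rw [Summable.tsum_add h1 hg, tsum_eq_sum (s := F) (by intro k hk; simp [hk])]
    congr 1
    exact Finset.sum_congr rfl fun k hk => by simp [hk]
  have hbound : ∑' k, ‖(x - psum b x F) (b k)‖ ^ 2 < ε ^ 2 := by
    have := hF
    simp only [Set.mem_setOf_eq] at this
    linarith [htsum]
  rw [hsNorm]
  exact (Real.sqrt_lt' hε).mpr hbound

end Helpers


/-- Let `u` be a bounded bilinear map on Hilbert–Schmidt operators (bilinearity and
the bound `‖u(y,x)‖ ≤ C‖y‖₂‖x‖₂` are hypotheses).  Then `u(y, xR) = u(y,x)R` for all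
Hilbert–Schmidt `x, y` and all `R ∈ M₁'` if and only if, for all `ξ₂, η₂, ξ₃, η₃`,
the operator `U₁(ξ̄₂,η₂,ξ̄₃,η₃)` determined by the matrix coefficients
`⟨U₁ η₁, ξ₁⟩ = ⟨u(ξ̄₂⊗η₃, ξ̄₁⊗η₂)(η₁), ξ₃⟩` belongs to `M₁`. -/
theorem stmt_10 {ι₁ ι₂ H₁ H₂ H₃ : Type*}
    [NormedAddCommGroup H₁] [InnerProductSpace ℂ H₁] [CompleteSpace H₁]
    [NormedAddCommGroup H₂] [InnerProductSpace ℂ H₂] [CompleteSpace H₂]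
    [NormedAddCommGroup H₃] [InnerProductSpace ℂ H₃] [CompleteSpace H₃]
    (M₁ : VonNeumannAlgebra H₁)
    (b₁ : HilbertBasis ι₁ ℂ H₁) (b₂ : HilbertBasis ι₂ ℂ H₂)
    (u : (H₂ →L[ℂ] H₃) → (H₁ →L[ℂ] H₂) → (H₁ →L[ℂ] H₃)) (C : ℝ)
    (hadd₁ : ∀ y x x', u y (x + x') = u y x + u y x')
    (hadd₂ : ∀ y y' x, u (y + y') x = u y x + u y' x)
    (hsmul₁ : ∀ (z : ℂ) y x, u y (z • x) = z • u y x)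
    (hsmul₂ : ∀ (z : ℂ) y x, u (z • y) x = z • u y x)
    (hbdd : ∀ y x, IsHS b₂ y → IsHS b₁ x → ‖u y x‖ ≤ C * hsNorm b₂ y * hsNorm b₁ x) :
    (∀ (y : H₂ →L[ℂ] H₃) (x : H₁ →L[ℂ] H₂), IsHS b₂ y → IsHS b₁ x →
        ∀ R : H₁ →L[ℂ] H₁, R ∈ M₁.commutant → u y (x ∘L R) = u y x ∘L R)
      ↔ ∀ (ξ₂ η₂ : H₂) (ξ₃ η₃ : H₃), ∃ A ∈ M₁, ∀ ξ₁ η₁ : H₁,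
          ⟪ξ₁, A η₁⟫_ℂ = ⟪ξ₃, u (rankOne η₃ ξ₂) (rankOne η₂ ξ₁) η₁⟫_ℂ := by
  classical
  have hzero₁ : ∀ y, u y 0 = 0 := by
    intro y
    have h0 := hsmul₁ 0 y 0
    simpa using h0
  have hzero₂ : ∀ x, u 0 x = 0 := by
    intro x
    have h0 := hsmul₂ 0 0 x
    simpa using h0
  set C' : ℝ := max C 0 with hC'def
  have hC' : 0 ≤ C' := le_max_right C 0
  have hbdd' : ∀ y x, IsHS b₂ y → IsHS b₁ x →
      ‖u y x‖ ≤ C' * hsNorm b₂ y * hsNorm b₁ x := by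
    intro y x hy hx
    refine (hbdd y x hy hx).trans ?_
    have h1 : C * hsNorm b₂ y ≤ C' * hsNorm b₂ y :=
      mul_le_mul_of_nonneg_right (le_max_left C 0) (hsNorm_nonneg _ _)
    exact mul_le_mul_of_nonneg_right h1 (hsNorm_nonneg _ _)
  constructor
  · -- forward direction
    intro hcomm ξ₂ η₂ ξ₃ η₃
    have hyHS : IsHS b₂ (rankOne η₃ ξ₂ : H₂ →L[ℂ] H₃) := isHS_rankOne b₂ η₃ ξ₂
    have hxHS : ∀ ξ₁ : H₁, IsHS b₁ (rankOne η₂ ξ₁ : H₁ →L[ℂ] H₂) :=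
      fun ξ₁ => isHS_rankOne b₁ η₂ ξ₁
    set Kc : ℝ := ‖ξ₃‖ * (C' * (‖ξ₂‖ * ‖η₃‖) * ‖η₂‖) with hKcdef
    have hfb : ∀ ξ₁ η₁ : H₁,
        ‖⟪ξ₃, u (rankOne η₃ ξ₂) (rankOne η₂ ξ₁) η₁⟫_ℂ‖ ≤ Kc * ‖ξ₁‖ * ‖η₁‖ := by
      intro ξ₁ η₁
      calc ‖⟪ξ₃, u (rankOne η₃ ξ₂) (rankOne η₂ ξ₁) η₁⟫_ℂ‖
          ≤ ‖ξ₃‖ * ‖u (rankOne η₃ ξ₂) (rankOne η₂ ξ₁) η₁‖ := norm_inner_le_norm _ _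
        _ ≤ ‖ξ₃‖ * (‖u (rankOne η₃ ξ₂) (rankOne η₂ ξ₁)‖ * ‖η₁‖) :=
            mul_le_mul_of_nonneg_left ((u (rankOne η₃ ξ₂) (rankOne η₂ ξ₁)).le_opNorm η₁)
              (norm_nonneg ξ₃)
        _ ≤ ‖ξ₃‖ * ((C' * (‖ξ₂‖ * ‖η₃‖) * (‖ξ₁‖ * ‖η₂‖)) * ‖η₁‖) := by
            have hb := hbdd' _ _ hyHS (hxHS ξ₁)
            rw [hsNorm_rankOne, hsNorm_rankOne] at hb
            exact mul_le_mul_of_nonneg_left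
              (mul_le_mul_of_nonneg_right hb (norm_nonneg η₁)) (norm_nonneg ξ₃)
        _ = Kc * ‖ξ₁‖ * ‖η₁‖ := by rw [hKcdef]; ring
    have hf_add : ∀ (ξ ξ' η₁ : H₁),
        ⟪ξ₃, u (rankOne η₃ ξ₂) (rankOne η₂ (ξ + ξ')) η₁⟫_ℂ
          = ⟪ξ₃, u (rankOne η₃ ξ₂) (rankOne η₂ ξ) η₁⟫_ℂ
            + ⟪ξ₃, u (rankOne η₃ ξ₂) (rankOne η₂ ξ') η₁⟫_ℂ := by
      intro ξ ξ' η₁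
      rw [rankOne_add_right, hadd₁]
      simp [inner_add_right]
    have hf_smul : ∀ (z : ℂ) (ξ η₁ : H₁),
        ⟪ξ₃, u (rankOne η₃ ξ₂) (rankOne η₂ (z • ξ)) η₁⟫_ℂ
          = (starRingEnd ℂ) z * ⟪ξ₃, u (rankOne η₃ ξ₂) (rankOne η₂ ξ) η₁⟫_ℂ := by
      intro z ξ η₁
      rw [rankOne_smul_right, hsmul₁]
      simp [inner_smul_right]
    -- the sesquilinear form
    let Bl : H₁ →ₗ⋆[ℂ] H₁ →ₗ[ℂ] ℂ :=
      { toFun := fun ξ₁ =>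
          { toFun := fun η₁ => ⟪ξ₃, u (rankOne η₃ ξ₂) (rankOne η₂ ξ₁) η₁⟫_ℂ
            map_add' := fun η η' => by simp [inner_add_right]
            map_smul' := fun z η => by simp [inner_smul_right] }
        map_add' := fun ξ ξ' => by
          ext η₁
          exact hf_add ξ ξ' η₁
        map_smul' := fun z ξ => by
          ext η₁
          simpa using hf_smul z ξ η₁ }
    let B : H₁ →L⋆[ℂ] H₁ →L[ℂ] ℂ := LinearMap.mkContinuous₂ Bl Kc hfb
    set A : H₁ →L[ℂ] H₁ :=
      ContinuousLinearMap.adjoint (InnerProductSpace.continuousLinearMapOfBilin B) with hAdef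
    have hA : ∀ ξ₁ η₁ : H₁,
        ⟪ξ₁, A η₁⟫_ℂ = ⟪ξ₃, u (rankOne η₃ ξ₂) (rankOne η₂ ξ₁) η₁⟫_ℂ := by
      intro ξ₁ η₁
      rw [hAdef, ContinuousLinearMap.adjoint_inner_right,
        InnerProductSpace.continuousLinearMapOfBilin_apply]
      rfl
    refine ⟨A, ?_, hA⟩
    rw [← VonNeumannAlgebra.commutant_commutant M₁]
    rw [VonNeumannAlgebra.mem_commutant_iff]
    intro R hR
    ext η₁
    have hkey : R (A η₁) = A (R η₁) := by
      apply ext_inner_left ℂ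
      intro ξ₁
      calc ⟪ξ₁, R (A η₁)⟫_ℂ
          = ⟪ContinuousLinearMap.adjoint R ξ₁, A η₁⟫_ℂ :=
            (ContinuousLinearMap.adjoint_inner_left R (A η₁) ξ₁).symm
        _ = ⟪ξ₃, u (rankOne η₃ ξ₂) (rankOne η₂ (ContinuousLinearMap.adjoint R ξ₁)) η₁⟫_ℂ :=
            hA _ _
        _ = ⟪ξ₃, u (rankOne η₃ ξ₂) (rankOne η₂ ξ₁ ∘L R) η₁⟫_ℂ := by rw [rankOne_comp]
        _ = ⟪ξ₃, (u (rankOne η₃ ξ₂) (rankOne η₂ ξ₁) ∘L R) η₁⟫_ℂ := by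
            rw [hcomm (rankOne η₃ ξ₂) (rankOne η₂ ξ₁) hyHS (hxHS ξ₁) R hR]
        _ = ⟪ξ₃, u (rankOne η₃ ξ₂) (rankOne η₂ ξ₁) (R η₁)⟫_ℂ := rfl
        _ = ⟪ξ₁, A (R η₁)⟫_ℂ := (hA _ _).symm
    simpa [ContinuousLinearMap.mul_apply] using hkey
  · -- reverse direction
    intro h y x hy hx R hR
    -- rank-one case
    have hro : ∀ (ξ₂ η₂ : H₂) (η₃ : H₃) (ξ : H₁),
        u (rankOne η₃ ξ₂) (rankOne η₂ ξ ∘L R)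
          = u (rankOne η₃ ξ₂) (rankOne η₂ ξ) ∘L R := by
      intro ξ₂ η₂ η₃ ξ
      ext η₁
      apply ext_inner_left ℂ
      intro χ
      obtain ⟨A, hAmem, hAeq⟩ := h ξ₂ η₂ χ η₃
      have hARcomm : A * R = R * A := VonNeumannAlgebra.mem_commutant_iff.mp hR A hAmem
      calc ⟪χ, (u (rankOne η₃ ξ₂) (rankOne η₂ ξ ∘L R)) η₁⟫_ℂ
          = ⟪χ, u (rankOne η₃ ξ₂) (rankOne η₂ (ContinuousLinearMap.adjoint R ξ)) η₁⟫_ℂ := by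
            rw [rankOne_comp]
        _ = ⟪ContinuousLinearMap.adjoint R ξ, A η₁⟫_ℂ := (hAeq _ _).symm
        _ = ⟪ξ, R (A η₁)⟫_ℂ := ContinuousLinearMap.adjoint_inner_left R (A η₁) ξ
        _ = ⟪ξ, A (R η₁)⟫_ℂ := by
            have h6 : A (R η₁) = R (A η₁) := by
              calc A (R η₁) = (A * R) η₁ := rfl
                _ = (R * A) η₁ := by rw [hARcomm]
                _ = R (A η₁) := rfl
            rw [h6]
        _ = ⟪χ, u (rankOne η₃ ξ₂) (rankOne η₂ ξ) (R η₁)⟫_ℂ := hAeq _ _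
        _ = ⟪χ, (u (rankOne η₃ ξ₂) (rankOne η₂ ξ) ∘L R) η₁⟫_ℂ := rfl
    -- summation lemmas
    have hsum₁ : ∀ (t : H₂ →L[ℂ] H₃) (s : Finset ι₁) (f : ι₁ → (H₁ →L[ℂ] H₂)),
        u t (∑ i ∈ s, f i) = ∑ i ∈ s, u t (f i) := by
      intro t s f
      induction s using Finset.induction_on with
      | empty => simpa using hzero₁ t
      | insert _ _ hnot ih => rw [Finset.sum_insert hnot, Finset.sum_insert hnot, hadd₁, ih]
    have hsum₂ : ∀ (s : Finset ι₂) (f : ι₂ → (H₂ →L[ℂ] H₃)) (t : H₁ →L[ℂ] H₂),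
        u (∑ j ∈ s, f j) t = ∑ j ∈ s, u (f j) t := by
      intro s f t
      induction s using Finset.induction_on with
      | empty => simpa using hzero₂ t
      | insert _ _ hnot ih => rw [Finset.sum_insert hnot, Finset.sum_insert hnot, hadd₂, ih]
    -- finite-rank case
    have hfin : ∀ (F : Finset ι₁) (G : Finset ι₂),
        u (psum b₂ y G) (psum b₁ x F ∘L R) = u (psum b₂ y G) (psum b₁ x F) ∘L R := by
      intro F G
      have e1 : psum b₁ x F ∘L R = ∑ i ∈ F, (rankOne (x (b₁ i)) (b₁ i) ∘L R) := by
        rw [psum]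
        ext v
        simp
      calc u (psum b₂ y G) (psum b₁ x F ∘L R)
          = ∑ i ∈ F, u (psum b₂ y G) (rankOne (x (b₁ i)) (b₁ i) ∘L R) := by
            rw [e1, hsum₁]
        _ = ∑ i ∈ F, ∑ j ∈ G, u (rankOne (y (b₂ j)) (b₂ j)) (rankOne (x (b₁ i)) (b₁ i) ∘L R) := by
            refine Finset.sum_congr rfl fun i _ => ?_
            rw [psum, hsum₂]
        _ = ∑ i ∈ F, ∑ j ∈ G, u (rankOne (y (b₂ j)) (b₂ j)) (rankOne (x (b₁ i)) (b₁ i)) ∘L R :=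
            Finset.sum_congr rfl fun i _ => Finset.sum_congr rfl fun j _ => hro _ _ _ _
        _ = (∑ i ∈ F, ∑ j ∈ G, u (rankOne (y (b₂ j)) (b₂ j)) (rankOne (x (b₁ i)) (b₁ i))) ∘L R := by
            ext v
            simp
        _ = u (psum b₂ y G) (psum b₁ x F) ∘L R := by
            congr 1
            rw [psum, psum, hsum₁]
            exact Finset.sum_congr rfl fun i _ => (hsum₂ G _ _).symm
    -- norms
    have hnx : 0 ≤ hsNorm b₁ x := hsNorm_nonneg _ _
    have hny : 0 ≤ hsNorm b₂ y := hsNorm_nonneg _ _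
    set Bc : ℝ := 2 * C' * ‖R‖ * (hsNorm b₁ x + hsNorm b₂ y) + 1 with hBcdef
    have hBc : 0 < Bc := by
      have h1 : 0 ≤ 2 * C' * ‖R‖ * (hsNorm b₁ x + hsNorm b₂ y) := by
        have := norm_nonneg R
        positivity
      linarith
    suffices hsuff : ∀ δ : ℝ, 0 < δ → ‖u y (x ∘L R) - u y x ∘L R‖ ≤ Bc * δ by
      have hle : ∀ ε : ℝ, 0 < ε → ‖u y (x ∘L R) - u y x ∘L R‖ ≤ 0 + ε := by
        intro ε hε
        rw [zero_add]
        calc ‖u y (x ∘L R) - u y x ∘L R‖ ≤ Bc * (ε / Bc) := hsuff _ (div_pos hε hBc)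
          _ = ε := by field_simp
      have h0 := le_of_forall_pos_le_add hle
      have hnorm0 : ‖u y (x ∘L R) - u y x ∘L R‖ = 0 := le_antisymm h0 (norm_nonneg _)
      exact sub_eq_zero.mp (norm_eq_zero.mp hnorm0)
    intro δ hδ
    obtain ⟨F, hF⟩ := exists_psum_close hx hδ
    obtain ⟨G, hG⟩ := exists_psum_close hy hδ
    have hxF : IsHS b₁ (psum b₁ x F) := isHS_of_le hx (psum_dom b₁ x F)
    have hyG : IsHS b₂ (psum b₂ y G) := isHS_of_le hy (psum_dom b₂ y G)
    have hxd : IsHS b₁ (x - psum b₁ x F) := isHS_of_le hx (sub_psum_dom b₁ x F)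
    have hyd : IsHS b₂ (y - psum b₂ y G) := isHS_of_le hy (sub_psum_dom b₂ y G)
    have hyGle : hsNorm b₂ (psum b₂ y G) ≤ hsNorm b₂ y :=
      hsNorm_le_of_le hy (psum_dom b₂ y G)
    have hxR : IsHS b₁ (x ∘L R) := isHS_comp b₂ hx R
    have hxdR : IsHS b₁ ((x - psum b₁ x F) ∘L R) := isHS_comp b₂ hxd R
    have hxRn : hsNorm b₁ (x ∘L R) ≤ hsNorm b₁ x * ‖R‖ := hsNorm_comp_le b₂ hx R
    have hxdRn : hsNorm b₁ ((x - psum b₁ x F) ∘L R) ≤ δ * ‖R‖ :=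
      (hsNorm_comp_le b₂ hxd R).trans (mul_le_mul_of_nonneg_right hF.le (norm_nonneg R))
    -- decomposition
    have ex : x ∘L R = (x - psum b₁ x F) ∘L R + psum b₁ x F ∘L R := by
      rw [← ContinuousLinearMap.add_comp, sub_add_cancel]
    have e1 : u y (x ∘L R) = u (y - psum b₂ y G) (x ∘L R)
        + u (psum b₂ y G) ((x - psum b₁ x F) ∘L R)
        + u (psum b₂ y G) (psum b₁ x F ∘L R) := by
      conv_lhs => rw [show y = (y - psum b₂ y G) + psum b₂ y G from (sub_add_cancel _ _).symm]
      rw [hadd₂]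
      rw [show u (psum b₂ y G) (x ∘L R)
          = u (psum b₂ y G) ((x - psum b₁ x F) ∘L R) + u (psum b₂ y G) (psum b₁ x F ∘L R) from
        by rw [← hadd₁, ← ex]]
      rw [add_assoc]
    have e2 : u y x = u (y - psum b₂ y G) x + u (psum b₂ y G) (x - psum b₁ x F)
        + u (psum b₂ y G) (psum b₁ x F) := by
      conv_lhs => rw [show y = (y - psum b₂ y G) + psum b₂ y G from (sub_add_cancel _ _).symm]
      rw [hadd₂]
      rw [show u (psum b₂ y G) x
          = u (psum b₂ y G) (x - psum b₁ x F) + u (psum b₂ y G) (psum b₁ x F) from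
        by rw [← hadd₁, sub_add_cancel]]
      rw [add_assoc]
    have key : u y (x ∘L R) - u y x ∘L R
        = (u (y - psum b₂ y G) (x ∘L R) - u (y - psum b₂ y G) x ∘L R)
          + (u (psum b₂ y G) ((x - psum b₁ x F) ∘L R) - u (psum b₂ y G) (x - psum b₁ x F) ∘L R) := by
      rw [e1, e2, ContinuousLinearMap.add_comp, ContinuousLinearMap.add_comp, hfin F G]
      abel
    have n1 : ‖u (y - psum b₂ y G) (x ∘L R)‖ ≤ C' * δ * (hsNorm b₁ x * ‖R‖) := by
      refine (hbdd' _ _ hyd hxR).trans ?_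
      exact mul_le_mul (mul_le_mul_of_nonneg_left hG.le hC') hxRn (hsNorm_nonneg _ _)
        (mul_nonneg hC' hδ.le)
    have n2 : ‖u (y - psum b₂ y G) x ∘L R‖ ≤ C' * δ * hsNorm b₁ x * ‖R‖ := by
      refine (ContinuousLinearMap.opNorm_comp_le _ _).trans ?_
      refine mul_le_mul_of_nonneg_right ?_ (norm_nonneg R)
      refine (hbdd' _ _ hyd hx).trans ?_
      exact mul_le_mul_of_nonneg_right (mul_le_mul_of_nonneg_left hG.le hC') hnx
    have n3 : ‖u (psum b₂ y G) ((x - psum b₁ x F) ∘L R)‖ ≤ C' * hsNorm b₂ y * (δ * ‖R‖) := by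
      refine (hbdd' _ _ hyG hxdR).trans ?_
      exact mul_le_mul (mul_le_mul_of_nonneg_left hyGle hC') hxdRn (hsNorm_nonneg _ _)
        (mul_nonneg hC' hny)
    have n4 : ‖u (psum b₂ y G) (x - psum b₁ x F) ∘L R‖ ≤ C' * hsNorm b₂ y * δ * ‖R‖ := by
      refine (ContinuousLinearMap.opNorm_comp_le _ _).trans ?_
      refine mul_le_mul_of_nonneg_right ?_ (norm_nonneg R)
      refine (hbdd' _ _ hyG hxd).trans ?_
      exact mul_le_mul (mul_le_mul_of_nonneg_left hyGle hC') hF.le (hsNorm_nonneg _ _)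
        (mul_nonneg hC' hny)
    calc ‖u y (x ∘L R) - u y x ∘L R‖
        ≤ ‖u (y - psum b₂ y G) (x ∘L R) - u (y - psum b₂ y G) x ∘L R‖
          + ‖u (psum b₂ y G) ((x - psum b₁ x F) ∘L R)
              - u (psum b₂ y G) (x - psum b₁ x F) ∘L R‖ := by
          rw [key]; exact norm_add_le _ _
      _ ≤ (‖u (y - psum b₂ y G) (x ∘L R)‖ + ‖u (y - psum b₂ y G) x ∘L R‖)
          + (‖u (psum b₂ y G) ((x - psum b₁ x F) ∘L R)‖
              + ‖u (psum b₂ y G) (x - psum b₁ x F) ∘L R‖) :=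
          add_le_add (norm_sub_le _ _) (norm_sub_le _ _)
      _ ≤ (C' * δ * (hsNorm b₁ x * ‖R‖) + C' * δ * hsNorm b₁ x * ‖R‖)
          + (C' * hsNorm b₂ y * (δ * ‖R‖) + C' * hsNorm b₂ y * δ * ‖R‖) :=
          add_le_add (add_le_add n1 n2) (add_le_add n3 n4)
      _ = 2 * C' * ‖R‖ * (hsNorm b₁ x + hsNorm b₂ y) * δ := by ring
      _ ≤ Bc * δ := by
          rw [hBcdef]
          exact mul_le_mul_of_nonneg_right (le_add_of_nonneg_right zero_le_one) hδ.le
end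
end

section
/- Let M be a von Neumann algebra and I an index set. Let X be the set of families s = (s_i)_{i∈I} with s_i ∈ M such that the partial sums Σ_{i∈J} s_i* s_i (J ⊆ I finite) are uniformly bounded. Then for s, t ∈ X, the family (s_i* t_i)_{i∈I} is summable in the weak* topology of M, and setting ⟨s,t⟩ = Σ_{i∈I} s_i* t_i endows X with the structure of a Hilbert M-module (with componentwise right action (s_i)·m = (s_i m)): the inner product is positive, definite, hermitian, M-linear in the second variable, and X is complete for the norm ‖s‖ = ‖⟨s,s⟩‖^{1/2}. -/
open scoped InnerProductSpace
open Filter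

set_option linter.unusedSectionVars false
namespace Stmt15

variable {H : Type*} [NormedAddCommGroup H] [InnerProductSpace ℂ H] [CompleteSpace H] {I : Type*}

/-- Uniform quadratic bound for a family of operators. -/
def SqBdd (s : I → H →L[ℂ] H) : Prop :=
  ∃ c : ℝ, 0 ≤ c ∧ ∀ (J : Finset I) (ξ : H), ∑ i ∈ J, ‖s i ξ‖ ^ 2 ≤ c * ‖ξ‖ ^ 2

lemma inner_star_mul_self (a : H →L[ℂ] H) (ξ : H) :
    ⟪ξ, (star a * a) ξ⟫_ℂ = ((‖a ξ‖ : ℂ)) ^ 2 := by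
  rw [ContinuousLinearMap.mul_apply, ContinuousLinearMap.star_eq_adjoint,
    ContinuousLinearMap.adjoint_inner_right, inner_self_eq_norm_sq_to_K]
  norm_cast

lemma re_le_norm' (z : ℂ) : z.re ≤ ‖z‖ :=
  le_trans (le_abs_self _) (by exact Complex.abs_re_le_norm z)

lemma sum_sq_le (s : I → H →L[ℂ] H) (J : Finset I) (ξ : H) :
    ∑ i ∈ J, ‖s i ξ‖ ^ 2 ≤ ‖∑ i ∈ J, star (s i) * s i‖ * ‖ξ‖ ^ 2 := by
  have h1 : ((∑ i ∈ J, ‖s i ξ‖ ^ 2 : ℝ) : ℂ) = ⟪ξ, (∑ i ∈ J, star (s i) * s i) ξ⟫_ℂ := by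
    rw [ContinuousLinearMap.sum_apply, inner_sum]
    push_cast
    exact Finset.sum_congr rfl fun i _ => (inner_star_mul_self (s i) ξ).symm
  have h2 : (∑ i ∈ J, ‖s i ξ‖ ^ 2 : ℝ)
      = (⟪ξ, (∑ i ∈ J, star (s i) * s i) ξ⟫_ℂ).re := by
    rw [← h1, Complex.ofReal_re]
  rw [h2]
  calc (⟪ξ, (∑ i ∈ J, star (s i) * s i) ξ⟫_ℂ).re
      ≤ ‖⟪ξ, (∑ i ∈ J, star (s i) * s i) ξ⟫_ℂ‖ := re_le_norm' _
    _ ≤ ‖ξ‖ * ‖(∑ i ∈ J, star (s i) * s i) ξ‖ := norm_inner_le_norm _ _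
    _ ≤ ‖ξ‖ * (‖∑ i ∈ J, star (s i) * s i‖ * ‖ξ‖) := by
        gcongr
        exact ContinuousLinearMap.le_opNorm _ _
    _ = ‖∑ i ∈ J, star (s i) * s i‖ * ‖ξ‖ ^ 2 := by ring

lemma sum_cs (J : Finset I) (f g : I → ℝ) (hf : ∀ i, 0 ≤ f i) (hg : ∀ i, 0 ≤ g i) :
    ∑ i ∈ J, f i * g i
      ≤ Real.sqrt (∑ i ∈ J, f i ^ 2) * Real.sqrt (∑ i ∈ J, g i ^ 2) := by
  have h := Finset.sum_mul_sq_le_sq_mul_sq J f g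
  have h0 : 0 ≤ ∑ i ∈ J, f i * g i :=
    Finset.sum_nonneg fun i _ => mul_nonneg (hf i) (hg i)
  calc ∑ i ∈ J, f i * g i = Real.sqrt ((∑ i ∈ J, f i * g i) ^ 2) :=
        (Real.sqrt_sq h0).symm
    _ ≤ Real.sqrt ((∑ i ∈ J, f i ^ 2) * ∑ i ∈ J, g i ^ 2) := Real.sqrt_le_sqrt h
    _ = _ := Real.sqrt_mul (Finset.sum_nonneg fun i _ => sq_nonneg _) _

lemma norm_sum_star_apply_le {s : I → H →L[ℂ] H} {c : ℝ} (hc : 0 ≤ c) (J : Finset I)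
    (h : ∀ v : H, ∑ i ∈ J, ‖s i v‖ ^ 2 ≤ c * ‖v‖ ^ 2) (x : I → H) :
    ‖∑ i ∈ J, (star (s i)) (x i)‖
      ≤ Real.sqrt c * Real.sqrt (∑ i ∈ J, ‖x i‖ ^ 2) := by
  set v := ∑ i ∈ J, (star (s i)) (x i) with hv
  have key : ‖v‖ ^ 2 ≤ (Real.sqrt c * Real.sqrt (∑ i ∈ J, ‖x i‖ ^ 2)) * ‖v‖ := by
    have hre : (‖v‖ : ℝ) ^ 2 = (⟪v, v⟫_ℂ).re := by
      rw [inner_self_eq_norm_sq_to_K]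
      norm_cast
    rw [hre, hv]
    have hs : ⟪(∑ i ∈ J, (star (s i)) (x i) : H), v⟫_ℂ
        = ∑ i ∈ J, ⟪x i, s i v⟫_ℂ := by
      rw [sum_inner]
      refine Finset.sum_congr rfl fun i _ => ?_
      rw [ContinuousLinearMap.star_eq_adjoint, ContinuousLinearMap.adjoint_inner_left]
    rw [← hv, hs]
    calc (∑ i ∈ J, ⟪x i, s i v⟫_ℂ).re = ∑ i ∈ J, (⟪x i, s i v⟫_ℂ).re := by
          rw [Complex.re_sum]
      _ ≤ ∑ i ∈ J, ‖x i‖ * ‖s i v‖ := Finset.sum_le_sum fun i _ =>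
          le_trans (re_le_norm' _) (norm_inner_le_norm _ _)
      _ ≤ Real.sqrt (∑ i ∈ J, ‖x i‖ ^ 2) * Real.sqrt (∑ i ∈ J, ‖s i v‖ ^ 2) :=
          sum_cs J _ _ (fun i => norm_nonneg _) (fun i => norm_nonneg _)
      _ ≤ Real.sqrt (∑ i ∈ J, ‖x i‖ ^ 2) * Real.sqrt (c * ‖v‖ ^ 2) := by
          gcongr
          exact h v
      _ = (Real.sqrt c * Real.sqrt (∑ i ∈ J, ‖x i‖ ^ 2)) * ‖v‖ := by
          rw [Real.sqrt_mul hc, Real.sqrt_sq (norm_nonneg _)]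
          ring
  rcases eq_or_lt_of_le (norm_nonneg v) with h0 | h0
  · rw [← h0]
    positivity
  · have h2 : ‖v‖ * ‖v‖ ≤ (Real.sqrt c * Real.sqrt (∑ i ∈ J, ‖x i‖ ^ 2)) * ‖v‖ := by
      nlinarith [key]
    exact le_of_mul_le_mul_right h2 h0

lemma summable_sq {s : I → H →L[ℂ] H} (hs : SqBdd s) (ξ : H) :
    Summable fun i => ‖s i ξ‖ ^ 2 := by
  obtain ⟨c, hc, h⟩ := hs
  exact summable_of_sum_le (fun i => sq_nonneg _) fun J => h J ξ

lemma norm_partial_le {s t : I → H →L[ℂ] H} {c d : ℝ} (hc : 0 ≤ c) (hd : 0 ≤ d)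
    (hqs : ∀ (J : Finset I) (ξ : H), ∑ i ∈ J, ‖s i ξ‖ ^ 2 ≤ c * ‖ξ‖ ^ 2)
    (hqt : ∀ (J : Finset I) (ξ : H), ∑ i ∈ J, ‖t i ξ‖ ^ 2 ≤ d * ‖ξ‖ ^ 2)
    (η : H) (J : Finset I) :
    ‖∑ i ∈ J, (star (s i)) ((t i) η)‖ ≤ Real.sqrt c * Real.sqrt d * ‖η‖ := by
  calc ‖∑ i ∈ J, (star (s i)) ((t i) η)‖
      ≤ Real.sqrt c * Real.sqrt (∑ i ∈ J, ‖(t i) η‖ ^ 2) :=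
        norm_sum_star_apply_le hc J (fun v => hqs J v) _
    _ ≤ Real.sqrt c * Real.sqrt (d * ‖η‖ ^ 2) := by
        gcongr
        exact hqt J η
    _ = Real.sqrt c * Real.sqrt d * ‖η‖ := by
        rw [Real.sqrt_mul hd, Real.sqrt_sq (norm_nonneg _)]
        ring

lemma hsummable {s t : I → H →L[ℂ] H} (hs : SqBdd s) (ht : SqBdd t) (η : H) :
    Summable fun i => (star (s i)) ((t i) η) := by
  obtain ⟨c, hc, hqs⟩ := hs
  rw [summable_iff_vanishing_norm]
  intro ε hε
  have hg : Summable fun i => ‖t i η‖ ^ 2 := summable_sq ht η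
  set δ : ℝ := (ε / (Real.sqrt c + 1)) ^ 2 with hδ
  have hδpos : 0 < δ := by positivity
  obtain ⟨J0, hJ0⟩ := summable_iff_vanishing_norm.mp hg δ hδpos
  refine ⟨J0, fun K hK => ?_⟩
  have h1 : ‖∑ i ∈ K, (star (s i)) ((t i) η)‖
      ≤ Real.sqrt c * Real.sqrt (∑ i ∈ K, ‖t i η‖ ^ 2) :=
    norm_sum_star_apply_le hc K (fun v => hqs K v) _
  have h2 : ∑ i ∈ K, ‖t i η‖ ^ 2 < δ :=
    lt_of_le_of_lt (le_abs_self _) (by simpa [Real.norm_eq_abs] using hJ0 K hK)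
  have h3 : Real.sqrt (∑ i ∈ K, ‖t i η‖ ^ 2) ≤ Real.sqrt δ := Real.sqrt_le_sqrt h2.le
  have h4 : Real.sqrt δ = ε / (Real.sqrt c + 1) := Real.sqrt_sq (by positivity)
  have h5 : Real.sqrt c * (ε / (Real.sqrt c + 1)) < ε := by
    rw [mul_div_assoc']
    rw [div_lt_iff₀ (by positivity)]
    nlinarith [Real.sqrt_nonneg c]
  calc ‖∑ i ∈ K, (star (s i)) ((t i) η)‖
      ≤ Real.sqrt c * Real.sqrt (∑ i ∈ K, ‖t i η‖ ^ 2) := h1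
    _ ≤ Real.sqrt c * (ε / (Real.sqrt c + 1)) := by rw [← h4]; gcongr
    _ < ε := h5

lemma norm_tsum_le_of_partial {f : I → H} (hf : Summable f) {b : ℝ}
    (h : ∀ J : Finset I, ‖∑ i ∈ J, f i‖ ≤ b) : ‖∑' i, f i‖ ≤ b := by
  have h1 : Filter.Tendsto (fun J : Finset I => ∑ i ∈ J, f i) Filter.atTop
      (nhds (∑' i, f i)) := hf.hasSum
  exact le_of_tendsto' h1.norm h

/-- The inner product as a linear map. -/
noncomputable def ipL (s t : I → H →L[ℂ] H) (hs : SqBdd s) (ht : SqBdd t) : H →ₗ[ℂ] H where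
  toFun η := ∑' i, (star (s i)) ((t i) η)
  map_add' η η' := by
    have h1 := hsummable hs ht η
    have h2 := hsummable hs ht η'
    rw [← Summable.tsum_add h1 h2]
    exact tsum_congr fun i => by simp
  map_smul' a η := by
    simp only [RingHom.id_apply]
    rw [← Summable.tsum_const_smul a (hsummable hs ht η)]
    exact tsum_congr fun i => by simp

noncomputable def ipAux (s t : I → H →L[ℂ] H) (hs : SqBdd s) (ht : SqBdd t) : H →L[ℂ] H :=
  LinearMap.mkContinuous (ipL s t hs ht)
    (Real.sqrt hs.choose * Real.sqrt ht.choose)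
    (fun η => by
      obtain ⟨hc, hq⟩ := hs.choose_spec
      obtain ⟨hd, hq'⟩ := ht.choose_spec
      exact norm_tsum_le_of_partial (hsummable hs ht η)
        (fun J => norm_partial_le hc hd hq hq' η J))

open Classical in
/-- The `M`-valued inner product on the column space. -/
noncomputable def ip (s t : I → H →L[ℂ] H) : H →L[ℂ] H :=
  if h : SqBdd s ∧ SqBdd t then ipAux s t h.1 h.2 else 0

lemma ip_apply {s t : I → H →L[ℂ] H} (hs : SqBdd s) (ht : SqBdd t) (η : H) :
    ip s t η = ∑' i, (star (s i)) ((t i) η) := by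
  rw [show ip s t = ipAux s t hs ht from dif_pos ⟨hs, ht⟩]
  rfl

lemma ip_norm_le {s t : I → H →L[ℂ] H} {c d : ℝ} (hc : 0 ≤ c) (hd : 0 ≤ d)
    (hqs : ∀ (J : Finset I) (ξ : H), ∑ i ∈ J, ‖s i ξ‖ ^ 2 ≤ c * ‖ξ‖ ^ 2)
    (hqt : ∀ (J : Finset I) (ξ : H), ∑ i ∈ J, ‖t i ξ‖ ^ 2 ≤ d * ‖ξ‖ ^ 2) :
    ‖ip s t‖ ≤ Real.sqrt c * Real.sqrt d := by
  refine ContinuousLinearMap.opNorm_le_bound _ (by positivity) fun η => ?_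
  rw [ip_apply ⟨c, hc, hqs⟩ ⟨d, hd, hqt⟩]
  exact norm_tsum_le_of_partial (hsummable ⟨c, hc, hqs⟩ ⟨d, hd, hqt⟩ η)
    (fun J => norm_partial_le hc hd hqs hqt η J)

lemma ip_hasSum {s t : I → H →L[ℂ] H} (hs : SqBdd s) (ht : SqBdd t) (ξ η : H) :
    HasSum (fun i => ⟪ξ, (star (s i)) ((t i) η)⟫_ℂ) ⟪ξ, ip s t η⟫_ℂ := by
  rw [ip_apply hs ht]
  have := (hsummable hs ht η).hasSum.mapL (innerSL ℂ ξ)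
  simpa using this

lemma inner_ip {s t : I → H →L[ℂ] H} (hs : SqBdd s) (ht : SqBdd t) (ξ η : H) :
    ⟪ξ, ip s t η⟫_ℂ = ∑' i, ⟪(s i) ξ, (t i) η⟫_ℂ := by
  rw [← (ip_hasSum hs ht ξ η).tsum_eq]
  exact tsum_congr fun i => by
    rw [ContinuousLinearMap.star_eq_adjoint, ContinuousLinearMap.adjoint_inner_right]

lemma inner_ip_self {s : I → H →L[ℂ] H} (hs : SqBdd s) (ξ : H) :
    ⟪ξ, ip s s ξ⟫_ℂ = ((∑' i, ‖s i ξ‖ ^ 2 : ℝ) : ℂ) := by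
  rw [inner_ip hs hs, Complex.ofReal_tsum]
  exact tsum_congr fun i => by rw [inner_self_eq_norm_sq_to_K]; norm_cast

lemma opBdd_of_sqBdd {s : I → H →L[ℂ] H} {c : ℝ} (hc : 0 ≤ c)
    (h : ∀ (J : Finset I) (ξ : H), ∑ i ∈ J, ‖s i ξ‖ ^ 2 ≤ c * ‖ξ‖ ^ 2)
    (J : Finset I) : ‖∑ i ∈ J, star (s i) * s i‖ ≤ c := by
  refine ContinuousLinearMap.opNorm_le_bound _ hc fun ξ => ?_
  have h0 : (∑ i ∈ J, star (s i) * s i) ξ = ∑ i ∈ J, (star (s i)) ((s i) ξ) := by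
    simp [ContinuousLinearMap.sum_apply]
  rw [h0]
  calc ‖∑ i ∈ J, (star (s i)) ((s i) ξ)‖
      ≤ Real.sqrt c * Real.sqrt (∑ i ∈ J, ‖s i ξ‖ ^ 2) :=
        norm_sum_star_apply_le hc J (fun v => h J v) _
    _ ≤ Real.sqrt c * Real.sqrt (c * ‖ξ‖ ^ 2) := by gcongr; exact h J ξ
    _ = c * ‖ξ‖ := by
        rw [Real.sqrt_mul hc, Real.sqrt_sq (norm_nonneg _), ← mul_assoc,
          Real.mul_self_sqrt hc]

lemma sqBdd_of_mem {s : I → H →L[ℂ] H} {c : ℝ}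
    (h : ∀ J : Finset I, ‖∑ i ∈ J, star (s i) * s i‖ ≤ c) : SqBdd s := by
  have hc : 0 ≤ c := le_trans (norm_nonneg _) (h ∅)
  exact ⟨c, hc, fun J ξ => le_trans (sum_sq_le s J ξ)
    (mul_le_mul_of_nonneg_right (h J) (sq_nonneg _))⟩

lemma sqBdd_add {s t : I → H →L[ℂ] H} (hs : SqBdd s) (ht : SqBdd t) :
    SqBdd (s + t) := by
  obtain ⟨c, hc, h⟩ := hs
  obtain ⟨d, hd, h'⟩ := ht
  refine ⟨2 * (c + d), by positivity, fun J ξ => ?_⟩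
  have h1 : ∀ i, ‖(s + t) i ξ‖ ^ 2 ≤ 2 * ‖s i ξ‖ ^ 2 + 2 * ‖t i ξ‖ ^ 2 := by
    intro i
    have h2 : ‖(s + t) i ξ‖ ≤ ‖s i ξ‖ + ‖t i ξ‖ := by
      simpa [Pi.add_apply] using norm_add_le (s i ξ) (t i ξ)
    have h3 := mul_self_le_mul_self (norm_nonneg ((s + t) i ξ)) h2
    nlinarith [sq_nonneg (‖s i ξ‖ - ‖t i ξ‖), h3]
  calc ∑ i ∈ J, ‖(s + t) i ξ‖ ^ 2
      ≤ ∑ i ∈ J, (2 * ‖s i ξ‖ ^ 2 + 2 * ‖t i ξ‖ ^ 2) :=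
        Finset.sum_le_sum fun i _ => h1 i
    _ = 2 * ∑ i ∈ J, ‖s i ξ‖ ^ 2 + 2 * ∑ i ∈ J, ‖t i ξ‖ ^ 2 := by
        rw [Finset.sum_add_distrib, Finset.mul_sum, Finset.mul_sum]
    _ ≤ 2 * (c * ‖ξ‖ ^ 2) + 2 * (d * ‖ξ‖ ^ 2) := by
        have := h J ξ; have := h' J ξ; nlinarith
    _ = 2 * (c + d) * ‖ξ‖ ^ 2 := by ring

lemma sqBdd_neg {s : I → H →L[ℂ] H} (hs : SqBdd s) : SqBdd (-s) := by
  obtain ⟨c, hc, h⟩ := hs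
  exact ⟨c, hc, fun J ξ => by simpa using h J ξ⟩

lemma sqBdd_sub {s t : I → H →L[ℂ] H} (hs : SqBdd s) (ht : SqBdd t) :
    SqBdd (s - t) := by
  rw [sub_eq_add_neg]
  exact sqBdd_add hs (sqBdd_neg ht)

lemma sqBdd_mul {t : I → H →L[ℂ] H} (ht : SqBdd t) (m : H →L[ℂ] H) :
    SqBdd (fun i => t i * m) := by
  obtain ⟨d, hd, h⟩ := ht
  refine ⟨d * ‖m‖ ^ 2, by positivity, fun J ξ => ?_⟩
  calc ∑ i ∈ J, ‖(t i * m) ξ‖ ^ 2 = ∑ i ∈ J, ‖t i (m ξ)‖ ^ 2 := rfl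
    _ ≤ d * ‖m ξ‖ ^ 2 := h J (m ξ)
    _ ≤ d * (‖m‖ * ‖ξ‖) ^ 2 := by
        exact mul_le_mul_of_nonneg_left
          (pow_le_pow_left₀ (norm_nonneg _) (ContinuousLinearMap.le_opNorm m ξ) 2) hd
    _ = d * ‖m‖ ^ 2 * ‖ξ‖ ^ 2 := by ring

lemma conj_tsum' (f : I → ℂ) :
    (starRingEnd ℂ) (∑' i, f i) = ∑' i, (starRingEnd ℂ) (f i) := by
  by_cases h : Summable f
  · exact (Complex.hasSum_conj.mpr (by simpa using h.hasSum)).tsum_eq.symm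
  · rw [tsum_eq_zero_of_not_summable h, tsum_eq_zero_of_not_summable (by
      intro hc
      exact h (by simpa using hc.star)), map_zero]

lemma summable_inner {s t : I → H →L[ℂ] H} (hs : SqBdd s) (ht : SqBdd t) (ξ η : H) :
    Summable fun i => ⟪(s i) ξ, (t i) η⟫_ℂ := by
  have h := (ip_hasSum hs ht ξ η).summable
  refine h.congr fun i => ?_
  rw [ContinuousLinearMap.star_eq_adjoint, ContinuousLinearMap.adjoint_inner_right]

lemma ip_star {s t : I → H →L[ℂ] H} (hs : SqBdd s) (ht : SqBdd t) :
    ip s t = star (ip t s) := by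
  ext η
  refine ext_inner_left ℂ fun ξ => ?_
  rw [ContinuousLinearMap.star_eq_adjoint, ContinuousLinearMap.adjoint_inner_right]
  conv_rhs => rw [← inner_conj_symm]
  rw [inner_ip ht hs η ξ, conj_tsum', inner_ip hs ht ξ η]
  exact tsum_congr fun i => (inner_conj_symm _ _).symm

lemma sum_sq_le_ip {s : I → H →L[ℂ] H} (hs : SqBdd s) (J : Finset I) (ξ : H) :
    ∑ i ∈ J, ‖s i ξ‖ ^ 2 ≤ ‖ip s s‖ * ‖ξ‖ ^ 2 := by
  have h1 : ∑ i ∈ J, ‖s i ξ‖ ^ 2 ≤ ∑' i, ‖s i ξ‖ ^ 2 :=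
    Summable.sum_le_tsum J (fun i _ => sq_nonneg _) (summable_sq hs ξ)
  have h2 : (∑' i, ‖s i ξ‖ ^ 2 : ℝ) = (⟪ξ, ip s s ξ⟫_ℂ).re := by
    rw [inner_ip_self hs ξ, Complex.ofReal_re]
  calc ∑ i ∈ J, ‖s i ξ‖ ^ 2 ≤ ∑' i, ‖s i ξ‖ ^ 2 := h1
    _ = (⟪ξ, ip s s ξ⟫_ℂ).re := h2
    _ ≤ ‖⟪ξ, ip s s ξ⟫_ℂ‖ := re_le_norm' _
    _ ≤ ‖ξ‖ * ‖ip s s ξ‖ := norm_inner_le_norm _ _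
    _ ≤ ‖ξ‖ * (‖ip s s‖ * ‖ξ‖) := by
        gcongr
        exact ContinuousLinearMap.le_opNorm _ _
    _ = ‖ip s s‖ * ‖ξ‖ ^ 2 := by ring

lemma ip_mem (M : VonNeumannAlgebra H) {s t : I → H →L[ℂ] H}
    (hs : SqBdd s) (ht : SqBdd t) (hsM : ∀ i, s i ∈ M) (htM : ∀ i, t i ∈ M) :
    ip s t ∈ M := by
  rw [← M.commutant_commutant]
  rw [VonNeumannAlgebra.mem_commutant_iff]
  intro g hg
  rw [VonNeumannAlgebra.mem_commutant_iff] at hg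
  ext η
  have hsum := hsummable hs ht η
  have h1 : (g * ip s t) η = g (ip s t η) := rfl
  have h2 : (ip s t * g) η = ip s t (g η) := rfl
  rw [h1, h2, ip_apply hs ht η, ip_apply hs ht (g η), ← (hsum.hasSum.mapL g).tsum_eq]
  refine tsum_congr fun i => ?_
  have ha := hg (star (s i)) (star_mem (hsM i))
  have hb := hg (t i) (htM i)
  have hcomm : g * (star (s i) * t i) = (star (s i) * t i) * g := by
    rw [← mul_assoc, ← ha, mul_assoc, ← hb, ← mul_assoc]
  exact DFunLike.congr_fun hcomm η

end Stmt15


open scoped InnerProductSpace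

/-- The ultraweak column space `C_I^w(M)`: the set `X` of families `(sᵢ)` in a von
Neumann algebra `M` with uniformly bounded partial sums `Σ sᵢ*sᵢ` carries a Hilbert
`M`-module structure: for `s, t ∈ X` the family `(sᵢ*tᵢ)` is summable in the weak*
topology (encoded by matrix coefficients) with sum `⟨s,t⟩ ∈ M`; the inner product is
positive, definite, hermitian, additive and `M`-linear in the second variable; `X` is
closed under addition and the right `M`-action; and `X` is complete for the norm
`‖s‖ = ‖⟨s,s⟩‖^{1/2}`. -/
theorem stmt_15 {H : Type*} [NormedAddCommGroup H] [InnerProductSpace ℂ H]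
    [CompleteSpace H] (M : VonNeumannAlgebra H) {I : Type*}
    (X : Set (I → H →L[ℂ] H))
    (hX : X = {s | (∀ i, s i ∈ M) ∧
      ∃ c : ℝ, ∀ J : Finset I, ‖∑ i ∈ J, star (s i) * s i‖ ≤ c}) :
    ∃ ip : (I → H →L[ℂ] H) → (I → H →L[ℂ] H) → (H →L[ℂ] H),
      -- weak* summability of `(sᵢ* tᵢ)` with sum `ip s t`
      (∀ s ∈ X, ∀ t ∈ X, ∀ ξ η : H,
        HasSum (fun i => ⟪ξ, ((star (s i)) * t i) η⟫_ℂ) ⟪ξ, ip s t η⟫_ℂ) ∧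
      (∀ s ∈ X, ∀ t ∈ X, ip s t ∈ M) ∧
      -- positivity and definiteness
      (∀ s ∈ X, (ip s s).IsPositive) ∧
      (∀ s ∈ X, ip s s = 0 → s = 0) ∧
      -- hermitian symmetry
      (∀ s ∈ X, ∀ t ∈ X, ip s t = star (ip t s)) ∧
      -- additivity and `M`-linearity in the second variable
      (∀ s ∈ X, ∀ t ∈ X, ∀ t' ∈ X, ip s (t + t') = ip s t + ip s t') ∧
      (∀ s ∈ X, ∀ t ∈ X, ∀ m ∈ M, ip s (fun i => t i * m) = ip s t * m) ∧
      -- `X` is a right `M`-module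
      (∀ s ∈ X, ∀ t ∈ X, s + t ∈ X) ∧
      (∀ s ∈ X, ∀ m ∈ M, (fun i => s i * m) ∈ X) ∧
      -- completeness for the norm `‖s‖ = ‖⟨s,s⟩‖^{1/2}`
      (∀ u : ℕ → (I → H →L[ℂ] H), (∀ n, u n ∈ X) →
        (∀ ε > (0:ℝ), ∃ N, ∀ p ≥ N, ∀ q ≥ N,
          Real.sqrt ‖ip (u p - u q) (u p - u q)‖ < ε) →
        ∃ s ∈ X, Filter.Tendsto (fun n => Real.sqrt ‖ip (u n - s) (u n - s)‖)
          Filter.atTop (nhds 0)) := by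
  subst hX
  have memX : ∀ {s : I → H →L[ℂ] H}, s ∈ {s : I → H →L[ℂ] H | (∀ i, s i ∈ M) ∧
      ∃ c : ℝ, ∀ J : Finset I, ‖∑ i ∈ J, star (s i) * s i‖ ≤ c} → Stmt15.SqBdd s := by
    intro s h
    obtain ⟨c, hc⟩ := h.2
    exact Stmt15.sqBdd_of_mem hc
  refine ⟨Stmt15.ip, ?_, ?_, ?_, ?_, ?_, ?_, ?_, ?_, ?_, ?_⟩
  · -- HasSum
    intro s hs t ht ξ η
    exact Stmt15.ip_hasSum (memX hs) (memX ht) ξ η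
  · -- membership
    intro s hs t ht
    exact Stmt15.ip_mem M (memX hs) (memX ht) hs.1 ht.1
  · -- positive
    intro s hs
    refine ⟨IsSelfAdjoint.isSymmetric (Stmt15.ip_star (memX hs) (memX hs)).symm, fun x => ?_⟩
    rw [ContinuousLinearMap.reApplyInnerSelf_apply]
    have h2 : ⟪(Stmt15.ip s s) x, x⟫_ℂ = ((∑' i, ‖s i x‖ ^ 2 : ℝ) : ℂ) := by
      rw [← inner_conj_symm, Stmt15.inner_ip_self (memX hs) x]
      simp
    rw [h2]
    have h3 : (0:ℝ) ≤ ∑' i, ‖s i x‖ ^ 2 := tsum_nonneg fun i => sq_nonneg _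
    simpa using h3
  · -- definite
    intro s hs h0
    funext i
    ext ξ
    have h := Stmt15.inner_ip_self (memX hs) ξ
    rw [h0] at h
    simp only [ContinuousLinearMap.zero_apply, inner_zero_right] at h
    have hz : (∑' i, ‖s i ξ‖ ^ 2 : ℝ) = 0 := by
      exact_mod_cast h.symm
    have hle := Summable.le_tsum (Stmt15.summable_sq (memX hs) ξ) i (fun j _ => sq_nonneg _)
    rw [hz] at hle
    have : ‖s i ξ‖ = 0 := by nlinarith [norm_nonneg (s i ξ)]
    simpa using norm_eq_zero.mp this
  · -- hermitian
    intro s hs t ht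
    exact Stmt15.ip_star (memX hs) (memX ht)
  · -- additive
    intro s hs t ht t' ht'
    have h1 := memX hs
    have h2 := memX ht
    have h3 := memX ht'
    ext η
    rw [ContinuousLinearMap.add_apply, Stmt15.ip_apply h1 (Stmt15.sqBdd_add h2 h3), Stmt15.ip_apply h1 h2,
      Stmt15.ip_apply h1 h3, ← Summable.tsum_add (Stmt15.hsummable h1 h2 η) (Stmt15.hsummable h1 h3 η)]
    exact tsum_congr fun i => by simp
  · -- M-linear
    intro s hs t ht m hm
    ext η
    rw [ContinuousLinearMap.mul_apply, Stmt15.ip_apply (memX hs) (Stmt15.sqBdd_mul (memX ht) m),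
      Stmt15.ip_apply (memX hs) (memX ht)]
    rfl
  · -- add closed
    intro s hs t ht
    refine ⟨fun i => add_mem (hs.1 i) (ht.1 i), ?_⟩
    obtain ⟨c, hc0, hq⟩ := Stmt15.sqBdd_add (memX hs) (memX ht)
    exact ⟨c, fun J => Stmt15.opBdd_of_sqBdd hc0 hq J⟩
  · -- mul closed
    intro s hs m hm
    refine ⟨fun i => mul_mem (hs.1 i) hm, ?_⟩
    obtain ⟨c, hc0, hq⟩ := Stmt15.sqBdd_mul (memX hs) m
    exact ⟨c, fun J => Stmt15.opBdd_of_sqBdd hc0 hq J⟩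
  · -- completeness
    intro u hu hc
    have hq : ∀ n, Stmt15.SqBdd (u n) := fun n => memX (hu n)
    have hqd : ∀ p q, Stmt15.SqBdd (u p - u q) := fun p q => Stmt15.sqBdd_sub (hq p) (hq q)
    have key : ∀ p q (J : Finset I) (ξ : H),
        ∑ i ∈ J, ‖(u p - u q) i ξ‖ ^ 2
          ≤ ‖Stmt15.ip (u p - u q) (u p - u q)‖ * ‖ξ‖ ^ 2 :=
      fun p q J ξ => Stmt15.sum_sq_le_ip (hqd p q) J ξ
    have hop : ∀ p q (i : I),
        ‖(u p - u q) i‖ ≤ Real.sqrt ‖Stmt15.ip (u p - u q) (u p - u q)‖ := by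
      intro p q i
      refine ContinuousLinearMap.opNorm_le_bound _ (Real.sqrt_nonneg _) fun ξ => ?_
      have h1 : ‖(u p - u q) i ξ‖ ^ 2
          ≤ ‖Stmt15.ip (u p - u q) (u p - u q)‖ * ‖ξ‖ ^ 2 := by
        simpa using key p q {i} ξ
      have h2 : ‖(u p - u q) i ξ‖
          ≤ Real.sqrt (‖Stmt15.ip (u p - u q) (u p - u q)‖ * ‖ξ‖ ^ 2) := by
        rw [← Real.sqrt_sq (norm_nonneg ((u p - u q) i ξ))]
        exact Real.sqrt_le_sqrt h1
      calc ‖(u p - u q) i ξ‖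
          ≤ Real.sqrt (‖Stmt15.ip (u p - u q) (u p - u q)‖ * ‖ξ‖ ^ 2) := h2
        _ = Real.sqrt ‖Stmt15.ip (u p - u q) (u p - u q)‖ * ‖ξ‖ := by
            rw [Real.sqrt_mul (norm_nonneg _), Real.sqrt_sq (norm_nonneg _)]
    have hcauchy_i : ∀ i, ∃ L, Filter.Tendsto (fun n => u n i) Filter.atTop (nhds L) := by
      intro i
      have hcs : CauchySeq fun n => u n i := by
        rw [Metric.cauchySeq_iff]
        intro ε hε
        obtain ⟨N, hN⟩ := hc ε hε
        refine ⟨N, fun p hp q hq' => ?_⟩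
        rw [dist_eq_norm]
        exact lt_of_le_of_lt (hop p q i) (hN p hp q hq')
      exact cauchySeq_tendsto_of_complete hcs
    choose sfn hs_lim using hcauchy_i
    have sqlt : ∀ {x a : ℝ}, 0 ≤ x → Real.sqrt x < a → x ≤ a ^ 2 := by
      intro x a hx h
      nlinarith [Real.sq_sqrt hx, Real.sqrt_nonneg x]
    have transfer : ∀ (N : ℕ) (ε : ℝ),
        (∀ p, N ≤ p → ∀ q, N ≤ q → ‖Stmt15.ip (u p - u q) (u p - u q)‖ ≤ ε) →
        ∀ n, N ≤ n → ∀ (J : Finset I) (ξ : H),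
          ∑ i ∈ J, ‖(u n i - sfn i) ξ‖ ^ 2 ≤ ε * ‖ξ‖ ^ 2 := by
      intro N ε hN n hn J ξ
      have hlim : Filter.Tendsto (fun q => ∑ i ∈ J, ‖(u n i - u q i) ξ‖ ^ 2)
          Filter.atTop (nhds (∑ i ∈ J, ‖(u n i - sfn i) ξ‖ ^ 2)) := by
        refine tendsto_finset_sum J fun i _ => ?_
        have h1 : Filter.Tendsto (fun q => (u q i) ξ) Filter.atTop (nhds (sfn i ξ)) := by
          have := ((ContinuousLinearMap.apply ℂ H ξ).continuous.tendsto (sfn i)).comp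
            (hs_lim i)
          exact this
        have h2 : Filter.Tendsto (fun q => (u n i) ξ - (u q i) ξ) Filter.atTop
            (nhds ((u n i) ξ - sfn i ξ)) := tendsto_const_nhds.sub h1
        have h3 := (h2.norm).pow 2
        simpa using h3
      have hbound : ∀ᶠ q in Filter.atTop,
          ∑ i ∈ J, ‖(u n i - u q i) ξ‖ ^ 2 ≤ ε * ‖ξ‖ ^ 2 := by
        filter_upwards [Filter.eventually_ge_atTop N] with q hq'
        have hk : ∑ i ∈ J, ‖(u n - u q) i ξ‖ ^ 2
            ≤ ‖Stmt15.ip (u n - u q) (u n - u q)‖ * ‖ξ‖ ^ 2 := key n q J ξ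
        exact le_trans hk (mul_le_mul_of_nonneg_right (hN n hn q hq') (sq_nonneg _))
      exact le_of_tendsto hlim hbound
    obtain ⟨N₁, hN₁⟩ := hc 1 one_pos
    have hb1 : ∀ p, N₁ ≤ p → ∀ q, N₁ ≤ q →
        ‖Stmt15.ip (u p - u q) (u p - u q)‖ ≤ 1 := by
      intro p hp q hq'
      have := sqlt (norm_nonneg _) (hN₁ p hp q hq')
      simpa using this
    have hdq : Stmt15.SqBdd (fun i => u N₁ i - sfn i) :=
      ⟨1, zero_le_one, fun J ξ => by simpa using transfer N₁ 1 hb1 N₁ le_rfl J ξ⟩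
    have hsfn : Stmt15.SqBdd sfn := by
      have h2 : sfn = u N₁ - fun i => u N₁ i - sfn i := by funext i; simp
      rw [h2]
      exact Stmt15.sqBdd_sub (hq N₁) hdq
    have hmemM : ∀ i, sfn i ∈ M := by
      intro i
      rw [← M.commutant_commutant, VonNeumannAlgebra.mem_commutant_iff]
      intro g hg
      rw [VonNeumannAlgebra.mem_commutant_iff] at hg
      have h1 : Filter.Tendsto (fun n => g * u n i) Filter.atTop (nhds (g * sfn i)) :=
        tendsto_const_nhds.mul (hs_lim i)
      have h2 : Filter.Tendsto (fun n => u n i * g) Filter.atTop (nhds (sfn i * g)) :=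
        (hs_lim i).mul tendsto_const_nhds
      have h3 : (fun n => g * u n i) = fun n => u n i * g :=
        funext fun n => (hg (u n i) ((hu n).1 i)).symm
      rw [h3] at h1
      exact tendsto_nhds_unique h1 h2
    refine ⟨sfn, ⟨hmemM, ?_⟩, ?_⟩
    · obtain ⟨c, hc0, hq'⟩ := hsfn
      exact ⟨c, fun J => Stmt15.opBdd_of_sqBdd hc0 hq' J⟩
    · rw [Metric.tendsto_atTop]
      intro ε hε
      obtain ⟨N, hN⟩ := hc (ε / 2) (by positivity)
      refine ⟨N, fun n hn => ?_⟩
      have hb : ∀ p, N ≤ p → ∀ q, N ≤ q →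
          ‖Stmt15.ip (u p - u q) (u p - u q)‖ ≤ (ε / 2) ^ 2 :=
        fun p hp q hq' => sqlt (norm_nonneg _) (hN p hp q hq')
      have hqe : ∀ (J : Finset I) (ξ : H),
          ∑ i ∈ J, ‖(u n - sfn) i ξ‖ ^ 2 ≤ (ε / 2) ^ 2 * ‖ξ‖ ^ 2 :=
        fun J ξ => transfer N ((ε / 2) ^ 2) hb n hn J ξ
      have hnorm : ‖Stmt15.ip (u n - sfn) (u n - sfn)‖ ≤ (ε / 2) ^ 2 := by
        have h5 := Stmt15.ip_norm_le (c := (ε / 2) ^ 2) (d := (ε / 2) ^ 2)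
          (by positivity) (by positivity) hqe hqe
        calc ‖Stmt15.ip (u n - sfn) (u n - sfn)‖
            ≤ Real.sqrt ((ε / 2) ^ 2) * Real.sqrt ((ε / 2) ^ 2) := h5
          _ = (ε / 2) ^ 2 := by
              rw [Real.sqrt_sq (by positivity)]
              ring
      rw [Real.dist_eq, sub_zero, abs_of_nonneg (Real.sqrt_nonneg _)]
      calc Real.sqrt ‖Stmt15.ip (u n - sfn) (u n - sfn)‖
          ≤ Real.sqrt ((ε / 2) ^ 2) := Real.sqrt_le_sqrt hnorm
        _ = ε / 2 := Real.sqrt_sq (by positivity)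
        _ < ε := by linarith
end
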